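/- arXiv:2007.09125 — 4 statements merged into one kernel-verified Lean document; each statement's English description precedes it below -/
import Mathlib

section
/- Let V be a finite-dimensional real vector space with basis S and inner product making S orthonormal, and let U ⊆ V be any subspace. Then there exists T ⊆ S such that U^⊥ has a basis (x_t : t∈T) with ⟨x_t,t'⟩ = δ_{tt'} for all t'∈T, and U has a basis (x_s : s∈S∖T) with ⟨x_s,s'⟩ = δ_{ss'} for all s'∈S∖T. -/
open scoped RealInnerProductSpace

/-- for a finite-dimensional real inner product space `V` with
orthonormal basis `S` (indexed by `ι`) and any subspace `U`, there is a
"spanning tree" `T ⊆ ι`: `U^⊥` has a basis `(x_t : t ∈ T)` with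
`⟪x_t, t'⟫ = δ_{tt'}` and `U` has a basis `(x_s : s ∉ T)` with `⟪x_s, s'⟫ = δ_{ss'}`. -/
theorem stmt5 {V : Type*} [NormedAddCommGroup V] [InnerProductSpace ℝ V]
    [FiniteDimensional ℝ V] {ι : Type*} [Fintype ι] [DecidableEq ι]
    (b : Module.Basis ι ℝ V) (hb : Orthonormal ℝ b) (U : Submodule ℝ V) :
    ∃ T : Finset ι,
      (∃ bCut : Module.Basis {i : ι // i ∈ T} ℝ ↥Uᗮ,
        ∀ t t' : {i : ι // i ∈ T},
          ⟪(bCut t : V), b t'.1⟫ = (if t = t' then 1 else 0)) ∧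
      (∃ bCyc : Module.Basis {i : ι // i ∉ T} ℝ ↥U,
        ∀ s s' : {i : ι // i ∉ T},
          ⟪(bCyc s : V), b s'.1⟫ = (if s = s' then 1 else 0)) := by
  classical
  set v : ι → ↥Uᗮ := fun i => Submodule.orthogonalProjectionOnto Uᗮ (b i) with hv
  -- the projections of the basis span Uᗮ
  have hspan : Submodule.span ℝ (Set.range v) = ⊤ := by
    have hsurj : Function.Surjective
        ((Submodule.orthogonalProjectionOnto Uᗮ).toLinearMap) := fun u =>
      ⟨u, Submodule.orthogonalProjectionOnto_mem_subspace_eq_self u⟩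
    have hrange : Set.range v =
        (Submodule.orthogonalProjectionOnto Uᗮ).toLinearMap '' Set.range b := by
      rw [← Set.range_comp]; rfl
    rw [hrange, ← Submodule.map_span, b.span_eq, Submodule.map_top,
      LinearMap.range_eq_top.mpr hsurj]
  obtain ⟨B, hBsub, hBspan, hBind⟩ := exists_linearIndependent ℝ (Set.range v)
  rw [hspan] at hBspan
  haveI : Fintype B := ((Set.finite_range v).subset hBsub).fintype
  have hgex : ∀ x : B, ∃ i, v i = (x : ↥Uᗮ) := fun x => hBsub x.2
  choose g hg using hgex
  set T : Finset ι := Finset.image g Finset.univ with hT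
  have hgT : ∀ x : B, g x ∈ T := fun x =>
    Finset.mem_image.mpr ⟨x, Finset.mem_univ _, rfl⟩
  have hmemB : ∀ i ∈ T, v i ∈ B := by
    intro i hi
    obtain ⟨x, -, rfl⟩ := Finset.mem_image.mp hi
    rw [hg]; exact x.2
  -- a basis of Uᗮ indexed by T
  have bB : Module.Basis B ℝ ↥Uᗮ :=
    Module.Basis.mk hBind (by rw [Subtype.range_coe, hBspan])
  have fbij : Function.Bijective
      (fun t : {i : ι // i ∈ T} => (⟨v t.1, hmemB t.1 t.2⟩ : B)) := by
    constructor
    · rintro ⟨t, ht⟩ ⟨t', ht'⟩ h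
      obtain ⟨x, -, rfl⟩ := Finset.mem_image.mp ht
      obtain ⟨x', -, rfl⟩ := Finset.mem_image.mp ht'
      have hx : x = x' := by
        apply Subtype.ext
        have h2 := congrArg Subtype.val h
        simpa [hg] using h2
      simp [hx]
    · intro x
      refine ⟨⟨g x, hgT x⟩, ?_⟩
      apply Subtype.ext; simpa using hg x
  have bT : Module.Basis {i : ι // i ∈ T} ℝ ↥Uᗮ :=
    bB.reindex (Equiv.ofBijective _ fbij).symm
  have hdimT : Module.finrank ℝ ↥Uᗮ = Fintype.card {i : ι // i ∈ T} :=
    Module.finrank_eq_card_basis bT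
  -- coordinates w.r.t. the orthonormal basis
  have hrep : ∀ (y : V) (i : ι), b.repr y i = ⟪b i, y⟫ := by
    intro y i
    conv_rhs => rw [← b.linearCombination_repr y]
    rw [hb.inner_right_finsupp]
  -- the coordinate map on Uᗮ
  let φ : ↥Uᗮ →ₗ[ℝ] ({i : ι // i ∈ T} → ℝ) :=
    { toFun := fun x t => ⟪(x : V), b t.1⟫
      map_add' := by intro x y; funext t; simp [inner_add_left]
      map_smul' := by intro c x; funext t; simp [real_inner_smul_left] }
  have hφinj : Function.Injective φ := by
    rw [← LinearMap.ker_eq_bot, LinearMap.ker_eq_bot']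
    intro x hx
    have hx' : ∀ t ∈ T, ⟪x, v t⟫ = (0 : ℝ) := by
      intro t ht
      have h1 := congrFun hx ⟨t, ht⟩
      have h2 : ⟪x, v t⟫ = ⟪(x : V), b t⟫ :=
        Submodule.inner_orthogonalProjectionOnto_eq_of_mem_left (K := Uᗮ) x (b t)
      rw [h2]; exact h1
    have hxB : x ∈ (Submodule.span ℝ B)ᗮ := by
      rw [Submodule.mem_orthogonal]
      intro u hu
      induction hu using Submodule.span_induction with
      | mem y hy =>
        have hvy : v (g ⟨y, hy⟩) = y := hg ⟨y, hy⟩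
        rw [real_inner_comm, ← hvy]
        exact hx' _ (hgT ⟨y, hy⟩)
      | zero => simp
      | add y z _ _ hy hz => rw [inner_add_left, hy, hz, add_zero]
      | smul c y _ hy => rw [inner_smul_left, hy, mul_zero]
    rw [hBspan, Submodule.top_orthogonal_eq_bot] at hxB
    simpa using hxB
  have hdim1 : Module.finrank ℝ ↥Uᗮ
      = Module.finrank ℝ ({i : ι // i ∈ T} → ℝ) := by
    rw [hdimT, Module.finrank_pi]
  let eφ := φ.linearEquivOfInjective hφinj hdim1
  let bCut : Module.Basis {i : ι // i ∈ T} ℝ ↥Uᗮ := Module.Basis.ofEquivFun eφ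
  have hcut : ∀ t t' : {i : ι // i ∈ T},
      ⟪(bCut t : V), b t'.1⟫ = (if t = t' then 1 else 0) := by
    intro t t'
    have h1 : ⟪(bCut t : V), b t'.1⟫ = φ (bCut t) t' := rfl
    have h2 : φ (bCut t) = eφ (bCut t) :=
      (φ.linearEquivOfInjective_apply hφinj hdim1 (bCut t)).symm
    have h3 : (bCut t) = eφ.symm (Pi.single t 1) := by
      simp [bCut]
    rw [h1, h2, h3, eφ.apply_symm_apply]
    by_cases h : t = t'
    · subst h; simp
    · simp [Pi.single_apply, h, fun h' : t' = t => h h'.symm]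
  -- the coordinate map on U
  let ψ : ↥U →ₗ[ℝ] ({i : ι // i ∉ T} → ℝ) :=
    { toFun := fun x s => ⟪(x : V), b s.1⟫
      map_add' := by intro x y; funext s; simp [inner_add_left]
      map_smul' := by intro c x; funext s; simp [real_inner_smul_left] }
  have hψinj : Function.Injective ψ := by
    rw [← LinearMap.ker_eq_bot, LinearMap.ker_eq_bot']
    intro x hx
    have h0 : ∀ i, i ∉ T → b.repr (x : V) i = 0 := by
      intro i hi
      rw [hrep, real_inner_comm]
      exact congrFun hx ⟨i, hi⟩
    have h1 : ∀ i, i ∈ T → b.repr (x : V) i = 0 := by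
      intro i hi
      have horth : ⟪(bCut ⟨i, hi⟩ : V), (x : V)⟫ = 0 := by
        rw [real_inner_comm]
        exact (Submodule.mem_orthogonal U _).mp (bCut ⟨i, hi⟩).2 (x : V) x.2
      have hexp : ⟪(bCut ⟨i, hi⟩ : V), (x : V)⟫
          = ∑ j, b.repr (x : V) j * ⟪(bCut ⟨i, hi⟩ : V), b j⟫ := by
        conv_lhs => rw [← b.sum_repr (x : V)]
        rw [inner_sum]
        simp [real_inner_smul_right]
      have hsum : ∑ j, b.repr (x : V) j * ⟪(bCut ⟨i, hi⟩ : V), b j⟫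
          = b.repr (x : V) i := by
        rw [Finset.sum_eq_single_of_mem i (Finset.mem_univ i)]
        · rw [hcut ⟨i, hi⟩ ⟨i, hi⟩]; simp
        · intro j _ hj
          by_cases hjT : j ∈ T
          · rw [hcut ⟨i, hi⟩ ⟨j, hjT⟩]
            have : (⟨i, hi⟩ : {i : ι // i ∈ T}) ≠ ⟨j, hjT⟩ := by
              simp [Subtype.ext_iff]; exact fun h => hj h.symm
            simp [this]
          · rw [h0 j hjT, zero_mul]
      rw [hexp, hsum] at horth
      exact horth
    have hz : b.repr (x : V) = 0 := by
      ext i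
      by_cases hi : i ∈ T
      · simpa using h1 i hi
      · simpa using h0 i hi
    have hx0 : (x : V) = 0 := by
      have := b.repr.map_eq_zero_iff.mp hz
      exact this
    exact Subtype.ext hx0
  have hdim2 : Module.finrank ℝ ↥U
      = Module.finrank ℝ ({i : ι // i ∉ T} → ℝ) := by
    have hsum := Submodule.finrank_add_finrank_orthogonal U
    have hcard : Module.finrank ℝ V = Fintype.card ι :=
      Module.finrank_eq_card_basis b
    have hcompl : Fintype.card {i : ι // i ∉ T}
        = Fintype.card ι - Fintype.card {i : ι // i ∈ T} :=
      Fintype.card_subtype_compl _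
    rw [Module.finrank_pi]
    omega
  let eψ := ψ.linearEquivOfInjective hψinj hdim2
  let bCyc : Module.Basis {i : ι // i ∉ T} ℝ ↥U := Module.Basis.ofEquivFun eψ
  have hcyc : ∀ s s' : {i : ι // i ∉ T},
      ⟪(bCyc s : V), b s'.1⟫ = (if s = s' then 1 else 0) := by
    intro s s'
    have h1 : ⟪(bCyc s : V), b s'.1⟫ = ψ (bCyc s) s' := rfl
    have h2 : ψ (bCyc s) = eψ (bCyc s) :=
      (ψ.linearEquivOfInjective_apply hψinj hdim2 (bCyc s)).symm
    have h3 : (bCyc s) = eψ.symm (Pi.single s 1) := by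
      simp [bCyc]
    rw [h1, h2, h3, eψ.apply_symm_apply]
    by_cases h : s = s'
    · subst h; simp
    · simp [Pi.single_apply, h, fun h' : s' = s => h h'.symm]
  exact ⟨T, ⟨bCut, hcut⟩, ⟨bCyc, hcyc⟩⟩
end

section
/- For an oriented hypergraph over ℤ, the annihilator of Ker ∂_1 in C^1 equals Im δ^0 if and only if Im ∂_1 is a direct summand of C_0. -/
open Finset

/-- Incidence sign of vertex `v` in edge `e = (A e, B e)`. -/
def hsgn {V E : Type*} [DecidableEq V] (A B : E → Finset V) (e : E) (v : V) : ℤ :=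
  (if v ∈ B e then 1 else 0) - (if v ∈ A e then 1 else 0)

/-- The boundary homomorphism `∂₁ : C₁ → C₀` of an oriented hypergraph over `ℤ`. -/
noncomputable def bdry {V E : Type*} [DecidableEq V] [Fintype E] (A B : E → Finset V) :
    (E → ℤ) →ₗ[ℤ] (V → ℤ) :=
  LinearMap.pi fun v => ∑ e : E, hsgn A B e v • (LinearMap.proj e : (E → ℤ) →ₗ[ℤ] ℤ)

/-- The coboundary homomorphism `δ⁰ : C⁰ → C¹`, the dual of `∂₁`. -/
noncomputable def cobdry {V E : Type*} [DecidableEq V] [Fintype E] (A B : E → Finset V) :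
    Module.Dual ℤ (V → ℤ) →ₗ[ℤ] Module.Dual ℤ (E → ℤ) :=
  (bdry A B).dualMap

/-- The canonical map `γ` from chains to cochains (dual-basis map). -/
noncomputable def gam (ι : Type*) [Fintype ι] [DecidableEq ι] :
    (ι → ℤ) →ₗ[ℤ] Module.Dual ℤ (ι → ℤ) :=
  (Pi.basisFun ℤ ι).toDual

/-- If every coordinate functional value of `w` is divisible by `n`, then `w ∈ n • N`. -/
lemma exists_smul_of_dual_dvd {R N : Type*} [CommRing R] [AddCommGroup N] [Module R N]
    [Module.Free R N] [Module.Finite R N] (n : R) (w : N)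
    (h : ∀ φ : Module.Dual R N, n ∣ φ w) : ∃ u : N, w = n • u := by
  classical
  let b := Module.Free.chooseBasis R N
  have hc : ∀ i, n ∣ b.coord i w := fun i => h (b.coord i)
  choose c hc using hc
  refine ⟨∑ i, c i • b i, ?_⟩
  calc w = ∑ i, b.repr w i • b i := (b.sum_repr w).symm
    _ = ∑ i, (n * c i) • b i := by
        refine Finset.sum_congr rfl fun i _ => ?_
        rw [← hc i]; rfl
    _ = n • ∑ i, c i • b i := by
        rw [Finset.smul_sum]
        exact Finset.sum_congr rfl fun i _ => (mul_smul n (c i) (b i))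

/-- the annihilator of `Ker ∂₁` in `C¹` equals `Im δ⁰` if and only if
`Im ∂₁` is a direct summand of `C₀`. -/
theorem stmt11 {V E : Type*} [Fintype V] [Fintype E] [DecidableEq V]
    (A B : E → Finset V) (hdisj : ∀ e, Disjoint (A e) (B e)) :
    (LinearMap.ker (bdry A B)).dualAnnihilator = LinearMap.range (cobdry A B) ↔
      ∃ W : Submodule ℤ (V → ℤ), IsCompl (LinearMap.range (bdry A B)) W := by
  classical
  set f := bdry A B with hf
  set M := LinearMap.range f with hM
  constructor
  · intro h
    -- every functional on M extends to V → ℤ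
    have hext : ∀ φ₀ : Module.Dual ℤ M, ∃ φ : Module.Dual ℤ (V → ℤ),
        ∀ m : M, φ (m : V → ℤ) = φ₀ m := by
      intro φ₀
      have hmem : (φ₀ ∘ₗ f.rangeRestrict) ∈ (LinearMap.ker f).dualAnnihilator := by
        rw [Submodule.mem_dualAnnihilator]
        intro x hx
        have : f.rangeRestrict x = 0 :=
          Subtype.ext (by simpa using (LinearMap.mem_ker.mp hx))
        simp [LinearMap.comp_apply, this]
      rw [h] at hmem
      obtain ⟨φ, hφ⟩ := hmem
      refine ⟨φ, ?_⟩
      rintro ⟨m, x, rfl⟩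
      have := congrArg (fun ψ => ψ x) hφ
      simp only [cobdry, LinearMap.dualMap_apply, LinearMap.comp_apply] at this
      exact this
    -- M is saturated
    have hsat : ∀ (x : V → ℤ) (n : ℤ), n ≠ 0 → n • x ∈ M → x ∈ M := by
      intro x n hn hw
      have hdvd : ∀ φ₀ : Module.Dual ℤ M, n ∣ φ₀ ⟨n • x, hw⟩ := by
        intro φ₀
        obtain ⟨φ, hφ⟩ := hext φ₀
        refine ⟨φ x, ?_⟩
        rw [← hφ ⟨n • x, hw⟩]
        show φ (n • x) = n * φ x
        rw [map_smul, smul_eq_mul]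
      obtain ⟨u, hu⟩ := exists_smul_of_dual_dvd n _ hdvd
      have : n • x = n • (u : V → ℤ) := by
        have := congrArg (Subtype.val) hu
        simpa using this
      have hx : x = (u : V → ℤ) := smul_right_injective _ hn this
      rw [hx]; exact u.2
    -- quotient is torsion-free, hence free, hence projective
    have htf : NoZeroSMulDivisors ℤ ((V → ℤ) ⧸ M) := by
      constructor
      intro n y hny
      by_cases hn : n = 0
      · exact Or.inl hn
      · right
        obtain ⟨x, rfl⟩ := Submodule.Quotient.mk_surjective M y
        have : Submodule.Quotient.mk (p := M) (n • x) = 0 := by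
          rw [Submodule.Quotient.mk_smul]; exact hny
        rw [Submodule.Quotient.mk_eq_zero] at this
        rw [Submodule.Quotient.mk_eq_zero]
        exact hsat x n hn this
    haveI hfree : Module.Free ℤ ((V → ℤ) ⧸ M) :=
      Module.free_of_finite_type_torsion_free'
    haveI hproj : Module.Projective ℤ ((V → ℤ) ⧸ M) := inferInstance
    obtain ⟨g, hg⟩ := Module.projective_lifting_property M.mkQ
      (LinearMap.id : ((V → ℤ) ⧸ M) →ₗ[ℤ] ((V → ℤ) ⧸ M))
      (Submodule.Quotient.mk_surjective M)
    -- projection onto M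
    let π : (V → ℤ) →ₗ[ℤ] (V → ℤ) := LinearMap.id - g ∘ₗ M.mkQ
    have hπmem : ∀ x, π x ∈ M := by
      intro x
      have : M.mkQ (π x) = 0 := by
        simp only [π, LinearMap.sub_apply, LinearMap.id_apply, LinearMap.comp_apply, map_sub]
        have := congrArg (fun ψ => ψ (M.mkQ x)) hg
        simp only [LinearMap.comp_apply, LinearMap.id_apply] at this
        rw [this, sub_self]
      rwa [← Submodule.Quotient.mk_eq_zero]
    let π' : (V → ℤ) →ₗ[ℤ] M := π.codRestrict M hπmem
    have hfix : ∀ x : M, π' x = x := by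
      intro x
      ext
      simp only [π', LinearMap.codRestrict_apply, π, LinearMap.sub_apply, LinearMap.id_apply,
        LinearMap.comp_apply]
      have : M.mkQ (x : V → ℤ) = 0 := by
        rw [Submodule.mkQ_apply, Submodule.Quotient.mk_eq_zero]; exact x.2
      rw [this, map_zero, sub_zero]
    exact ⟨LinearMap.ker π', LinearMap.isCompl_of_proj hfix⟩
  · rintro ⟨W, hW⟩
    refine le_antisymm ?_ ?_
    · intro ψ hψ
      rw [Submodule.mem_dualAnnihilator] at hψ
      have hle : LinearMap.ker f ≤ LinearMap.ker ψ := fun x hx =>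
        LinearMap.mem_ker.mpr (hψ x hx)
      let ψ' : ((E → ℤ) ⧸ LinearMap.ker f) →ₗ[ℤ] ℤ := (LinearMap.ker f).liftQ ψ hle
      let e := f.quotKerEquivRange
      let φ₀ : M →ₗ[ℤ] ℤ := ψ' ∘ₗ (e.symm : M →ₗ[ℤ] (E → ℤ) ⧸ LinearMap.ker f)
      let φ : Module.Dual ℤ (V → ℤ) := φ₀ ∘ₗ (M.linearProjOfIsCompl W hW)
      refine ⟨φ, ?_⟩
      refine LinearMap.ext fun x => ?_
      have hmem : f x ∈ M := LinearMap.mem_range_self f x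
      have h1 : M.linearProjOfIsCompl W hW (f x) = ⟨f x, hmem⟩ :=
        Submodule.linearProjOfIsCompl_apply_left hW ⟨f x, hmem⟩
      have h2 : e.symm ⟨f x, hmem⟩ = Submodule.Quotient.mk x := by
        apply e.injective
        simp only [LinearEquiv.apply_symm_apply]
        exact Subtype.ext (f.quotKerEquivRange_apply_mk x).symm
      show φ (f x) = ψ x
      simp only [φ, φ₀, LinearMap.comp_apply, h1, LinearEquiv.coe_coe, h2]
      exact Submodule.liftQ_apply _ _ _
    · exact LinearMap.range_dualMap_le_dualAnnihilator_ker f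
end

section
/- Every oriented hypergraph over ℤ satisfies 𝒞 = ℬ^⊥: a 1-chain x lies in Ker ∂_1 if and only if ⟨x,b⟩ = 0 for all b ∈ γ^{-1}(Im δ^0), where ⟨·,·⟩ is the standard inner product on C_1 making E orthonormal. -/
open Finset

lemma gam_apply {ι : Type*} [Fintype ι] [DecidableEq ι] (b y : ι → ℤ) :
    gam ι b y = ∑ i : ι, b i * y i := by
  have hy : y = ∑ i : ι, y i • (Pi.basisFun ℤ ι i) := by
    simpa using ((Pi.basisFun ℤ ι).sum_repr y).symm
  conv_lhs => rw [hy]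
  simp only [gam, map_sum, map_smul, Module.Basis.toDual_apply_left, Pi.basisFun_repr,
    smul_eq_mul]
  exact Finset.sum_congr rfl fun i _ => mul_comm _ _

lemma bdry_apply {V E : Type*} [DecidableEq V] [Fintype E] (A B : E → Finset V)
    (x : E → ℤ) (v : V) : bdry A B x v = ∑ e : E, hsgn A B e v * x e := by
  simp [bdry, LinearMap.pi_apply, LinearMap.sum_apply]

/-- every hypergraph over `ℤ` satisfies `𝒞 = ℬ^⊥`: a 1-chain lies in
`Ker ∂₁` iff it is orthogonal to every element of `ℬ = γ⁻¹(Im δ⁰)`. -/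
theorem stmt12 {V E : Type*} [Fintype V] [Fintype E] [DecidableEq V] [DecidableEq E]
    (A B : E → Finset V) (hdisj : ∀ e, Disjoint (A e) (B e)) (x : E → ℤ) :
    x ∈ LinearMap.ker (bdry A B) ↔
      ∀ b ∈ Submodule.comap (gam E) (LinearMap.range (cobdry A B)),
        ∑ e : E, x e * b e = 0 := by
  constructor
  · intro hx b hb
    obtain ⟨f, hf⟩ := hb
    have : gam E b x = 0 := by
      rw [← hf]
      simp only [cobdry, LinearMap.dualMap_apply]
      rw [LinearMap.mem_ker.mp hx]
      simp
    rw [gam_apply] at this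
    simpa [mul_comm] using this
  · intro h
    rw [LinearMap.mem_ker]
    funext v
    have hb : (fun e => hsgn A B e v) ∈
        Submodule.comap (gam E) (LinearMap.range (cobdry A B)) := by
      refine ⟨LinearMap.proj v, ?_⟩
      apply LinearMap.ext
      intro y
      simp [cobdry, gam_apply, bdry_apply]
    have := h _ hb
    rw [bdry_apply]
    simpa [mul_comm] using this
end

section
/- Consider the hypergraph with V = {v_1,v_2,v_3}, E = {e_1,e_2,e_3}, where e_i = ({v_j,v_k},{v_i}) for {i,j,k} = {1,2,3}; over ℤ, the boundary ∂_1 is injective but its image is not a direct summand of C_0; consequently the annihilator of Ker∂_1 in C^1 contains Im δ^0 properly, and H_1 = 0 while H^1 = C^1/Im δ^0 ≠ 0, so H_1 ≇ H^1. -/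
open Finset

/-! ### Auxiliary lemmas -/

abbrev A3 : Fin 3 → Finset (Fin 3) := fun i => ({i} : Finset (Fin 3))ᶜ
abbrev B3 : Fin 3 → Finset (Fin 3) := fun i => {i}

lemma bdry_apply3 (x : Fin 3 → ℤ) :
    bdry A3 B3 x 0 = x 0 - x 1 - x 2 ∧
    bdry A3 B3 x 1 = x 1 - x 0 - x 2 ∧
    bdry A3 B3 x 2 = x 2 - x 0 - x 1 := by
  refine ⟨?_, ?_, ?_⟩ <;> simp [bdry, hsgn, Fin.sum_univ_three] <;> ring

lemma ker3 : LinearMap.ker (bdry A3 B3) = ⊥ := by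
  apply LinearMap.ker_eq_bot'.2
  intro x hx
  obtain ⟨h0, h1, h2⟩ := bdry_apply3 x
  rw [hx] at h0 h1 h2
  simp only [Pi.zero_apply] at h0 h1 h2
  have hx0 : x 0 = 0 := by omega
  have hx1 : x 1 = 0 := by omega
  have hx2 : x 2 = 0 := by omega
  funext v
  fin_cases v <;> simp [hx0, hx1, hx2]

lemma e0_not_mem : (![1,0,0] : Fin 3 → ℤ) ∉ LinearMap.range (bdry A3 B3) := by
  rintro ⟨x, hx⟩
  obtain ⟨h0, h1, h2⟩ := bdry_apply3 x
  rw [hx] at h0 h1 h2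
  norm_num at h0 h1 h2
  omega

lemma two_e0_mem : (2 : ℤ) • (![1,0,0] : Fin 3 → ℤ) ∈ LinearMap.range (bdry A3 B3) := by
  refine ⟨![0,-1,-1], ?_⟩
  obtain ⟨h0, h1, h2⟩ := bdry_apply3 ![0,-1,-1]
  funext v
  fin_cases v <;> simp_all

lemma no_compl : ¬ ∃ W : Submodule ℤ (Fin 3 → ℤ), IsCompl (LinearMap.range (bdry A3 B3)) W := by
  rintro ⟨W, hW⟩
  have hg : (![1,0,0] : Fin 3 → ℤ) ∈ (⊤ : Submodule ℤ (Fin 3 → ℤ)) := trivial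
  rw [← hW.sup_eq_top] at hg
  obtain ⟨r, hr, w, hw, hrw⟩ := Submodule.mem_sup.1 hg
  have h2w : (2 : ℤ) • w ∈ LinearMap.range (bdry A3 B3) := by
    have h : (2 : ℤ) • w = (2 : ℤ) • (![1,0,0] : Fin 3 → ℤ) - (2 : ℤ) • r := by
      rw [← hrw]; module
    rw [h]
    exact Submodule.sub_mem _ two_e0_mem (Submodule.smul_mem _ _ hr)
  have h2w' : (2 : ℤ) • w ∈ LinearMap.range (bdry A3 B3) ⊓ W :=
    ⟨h2w, Submodule.smul_mem _ _ hw⟩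
  rw [hW.inf_eq_bot] at h2w'
  have hw0 : w = 0 := by
    have h := (Submodule.mem_bot (R := ℤ)).1 h2w'
    have h2 : (2 : ℤ) ≠ 0 := by norm_num
    exact (smul_eq_zero.1 h).resolve_left h2
  rw [hw0, add_zero] at hrw
  exact e0_not_mem (hrw ▸ hr)

lemma cobdry_ne_top : LinearMap.range (cobdry A3 B3) ≠ ⊤ := by
  intro htop
  have hmem : (LinearMap.proj 0 : Module.Dual ℤ (Fin 3 → ℤ)) ∈ LinearMap.range (cobdry A3 B3) :=
    htop ▸ Submodule.mem_top
  obtain ⟨g, hg⟩ := hmem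
  set a : Fin 3 → ℤ := fun v => g (fun j => if v = j then 1 else 0) with ha
  have hexp : ∀ y : Fin 3 → ℤ, g y = y 0 * a 0 + y 1 * a 1 + y 2 * a 2 := by
    intro y
    rw [LinearMap.pi_apply_eq_sum_univ g y, Fin.sum_univ_three]
    simp [ha, smul_eq_mul]
  have key : ∀ y : Fin 3 → ℤ,
      (y 0 - y 1 - y 2) * a 0 + (y 1 - y 0 - y 2) * a 1 + (y 2 - y 0 - y 1) * a 2 = y 0 := by
    intro y
    have h := congrArg (fun f : Module.Dual ℤ (Fin 3 → ℤ) => f y) hg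
    simp only [cobdry, LinearMap.dualMap_apply, LinearMap.proj_apply] at h
    rw [hexp] at h
    obtain ⟨c0, c1, c2⟩ := bdry_apply3 y
    rw [c0, c1, c2] at h
    exact h
  have eq0 := key ![1,0,0]
  have eq1 := key ![0,1,0]
  have eq2 := key ![0,0,1]
  norm_num [Matrix.cons_val_two] at eq0 eq1 eq2
  omega

/-- the hypergraph on `V = {v₁,v₂,v₃}`, `E = {e₁,e₂,e₃}` with
`eᵢ = ({vⱼ,vₖ},{vᵢ})` has injective `∂₁` whose image is not a direct summand of
`C₀`; the annihilator of `Ker ∂₁` contains `Im δ⁰` properly; `H₁ = 0` while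
`H¹ ≠ 0`, so `H₁ ≇ H¹`. -/
theorem stmt16 :
    let A : Fin 3 → Finset (Fin 3) := fun i => ({i} : Finset (Fin 3))ᶜ
    let B : Fin 3 → Finset (Fin 3) := fun i => {i}
    Function.Injective (bdry A B) ∧
    (¬ ∃ W : Submodule ℤ (Fin 3 → ℤ), IsCompl (LinearMap.range (bdry A B)) W) ∧
    LinearMap.range (cobdry A B) < (LinearMap.ker (bdry A B)).dualAnnihilator ∧
    LinearMap.ker (bdry A B) = ⊥ ∧
    Nontrivial (Module.Dual ℤ (Fin 3 → ℤ) ⧸ LinearMap.range (cobdry A B)) ∧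
    IsEmpty (↥(LinearMap.ker (bdry A B)) ≃ₗ[ℤ]
      (Module.Dual ℤ (Fin 3 → ℤ) ⧸ LinearMap.range (cobdry A B))) := by
  intro A B
  have hA : A = A3 := rfl
  have hB : B = B3 := rfl
  rw [hA, hB]
  have hlt : LinearMap.range (cobdry A3 B3) < ⊤ := lt_top_iff_ne_top.2 cobdry_ne_top
  have hnt : Nontrivial (Module.Dual ℤ (Fin 3 → ℤ) ⧸ LinearMap.range (cobdry A3 B3)) :=
    Submodule.Quotient.nontrivial_iff.mpr (ne_of_lt hlt)
  refine ⟨LinearMap.ker_eq_bot.1 ker3, no_compl, ?_, ker3, hnt, ?_⟩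
  · rw [ker3, Submodule.dualAnnihilator_bot]
    exact hlt
  · constructor
    intro f
    have hss : Subsingleton ↥(LinearMap.ker (bdry A3 B3)) := by
      rw [ker3]; infer_instance
    have hnt' : Nontrivial ↥(LinearMap.ker (bdry A3 B3)) := f.toEquiv.nontrivial
    exact false_of_nontrivial_of_subsingleton ↥(LinearMap.ker (bdry A3 B3))
end
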